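/- Let U be an ultrafilter on I, let (X_i) be a uniformly bounded family of metric spaces, and for each i let ψ_i : X_i → [−B, B] be functions for a fixed bound B. Define ψ on the ultraproduct N = ∏_U X_i by ψ([(a_i)]) = lim_U ψ_i(a_i) (assuming the ψ_i share a common uniform continuity modulus so this is well defined). Then inf_{b ∈ N} ψ(b) = lim_U (inf_{b_i ∈ X_i} ψ_i(b_i)). -/
import Mathlib


/-- `L` is the ultralimit of `r` along `U`. -/
def IsUltralim {I : Type*} (U : Ultrafilter I) (r : I → ℝ) (L : ℝ) : Prop :=
  ∀ ε > 0, {i | |r i - L| < ε} ∈ U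

/-- Łoś's theorem for the `inf` quantifier: if `ψ_i : X_i → [-B, B]` share a common uniform
continuity modulus and `Ψ` is the induced function on the metric ultraproduct (defined via
ultralimits on representatives), then `inf Ψ = lim_U (inf ψ_i)`. -/
theorem stmt14 {I : Type*} (U : Ultrafilter I) (X : I → Type*)
    [∀ i, MetricSpace (X i)] [∀ i, Nonempty (X i)]
    (B B' : ℝ) (hbd : ∀ (i : I) (a b : X i), dist a b ≤ B')
    (ψ : ∀ i, X i → ℝ) (hψb : ∀ (i : I) (a : X i), |ψ i a| ≤ B)
    (hmod : ∀ ε > 0, ∃ δ > 0, ∀ (i : I) (a b : X i), dist a b < δ → |ψ i a - ψ i b| ≤ ε)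
    (Ψ : (∀ i, X i) → ℝ)
    (hΨ : ∀ a : ∀ i, X i, IsUltralim U (fun i => ψ i (a i)) (Ψ a)) :
    IsUltralim U (fun i => ⨅ b : X i, ψ i b) (⨅ a : ∀ i, X i, Ψ a) := by
  have hlb : ∀ (i : I) (b : X i), -B ≤ ψ i b := fun i b => (abs_le.mp (hψb i b)).1
  have hbdd : ∀ i, BddBelow (Set.range (ψ i)) := fun i =>
    ⟨-B, by rintro x ⟨b, rfl⟩; exact hlb i b⟩
  have hΨlb : ∀ a, -B ≤ Ψ a := by
    intro a
    by_contra h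
    push_neg at h
    have hε : 0 < -B - Ψ a := by linarith
    obtain ⟨i, hi⟩ := Ultrafilter.nonempty_of_mem (hΨ a _ hε)
    simp only [Set.mem_setOf_eq] at hi
    have := (abs_lt.mp hi).2
    have := hlb i (a i)
    linarith
  have hΨbdd : BddBelow (Set.range Ψ) := ⟨-B, by rintro x ⟨a, rfl⟩; exact hΨlb a⟩
  set M := ⨅ a : ∀ i, X i, Ψ a with hM
  intro ε hε
  have hchoice : ∀ i, ∃ b : X i, ψ i b < (⨅ b, ψ i b) + ε / 4 := fun i =>
    exists_lt_of_ciInf_lt (lt_add_of_pos_right _ (by positivity))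
  choose a ha using hchoice
  obtain ⟨c, hc⟩ : ∃ c, Ψ c < M + ε / 4 :=
    exists_lt_of_ciInf_lt (lt_add_of_pos_right _ (by positivity))
  have S1 := hΨ a (ε / 4) (by positivity)
  have S2 := hΨ c (ε / 4) (by positivity)
  refine U.toFilter.sets_of_superset (Filter.inter_mem S1 S2) ?_
  rintro i ⟨h1, h2⟩
  simp only [Set.mem_setOf_eq] at h1 h2 ⊢
  have hL : (⨅ b, ψ i b) ≤ ψ i (c i) := ciInf_le (hbdd i) _
  have hMa : M ≤ Ψ a := ciInf_le hΨbdd a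
  have h1' := abs_lt.mp h1
  have h2' := abs_lt.mp h2
  rw [abs_lt]
  constructor <;> linarith [ha i]
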